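/- The 4-dimensional varietal hypercube VQ_4 is not edge-transitive: there is no graph automorphism σ of VQ_4 with {σ(0101), σ(1101)} = {0101, 0001}, even though both pairs 0101, 1101 and 0101, 0001 are edges of VQ_4. -/
import Mathlib


/-- Adjacency relation of the `n`-dimensional varietal hypercube `VQ_n`.
A vertex is a binary string `x_n x_{n-1} ... x_1`, encoded as a function
`X : Fin n → Bool` where `X ⟨k-1, _⟩` is the bit `x_k` (so index `n-1` is the
leading bit `x_n`). -/
def vqAdj : (n : ℕ) → (Fin n → Bool) → (Fin n → Bool) → Prop
  | 0, _, _ => False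
  | 1, X, Y => X ≠ Y
  | (n + 2), X, Y =>
    if X (Fin.last (n + 1)) = Y (Fin.last (n + 1)) then
      -- both in the same copy of `VQ_{n+1}`
      vqAdj (n + 1) (Fin.init X) (Fin.init Y)
    else if (n + 2) % 3 = 0 then
      -- transversal edge, `n + 2` divisible by 3:
      -- `x_{n-3} ... x_1 = y_{n-3} ... y_1` and
      -- `(x_{n-1}x_{n-2}, y_{n-1}y_{n-2}) ∈ {(00,00),(01,01),(10,11),(11,10)}`
      (∀ i : Fin (n + 2), (i : ℕ) < n - 1 → X i = Y i) ∧
      Y ⟨n, by omega⟩ = X ⟨n, by omega⟩ ∧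
      Y ⟨n - 1, by omega⟩ = xor (X ⟨n, by omega⟩) (X ⟨n - 1, by omega⟩)
    else
      -- transversal edge, `n + 2` not divisible by 3:
      -- `x_{n-1} ... x_1 = y_{n-1} ... y_1`
      Fin.init X = Fin.init Y

/-- The `n`-dimensional varietal hypercube. -/
def VQ (n : ℕ) : SimpleGraph (Fin n → Bool) := SimpleGraph.fromRel (vqAdj n)

/-- Apply `f` to the lowest `k` bits of a string of `m` bits, keeping the top
`m - k` bits unchanged. -/
def applyLow {m k : ℕ} (h : k ≤ m) (f : (Fin k → Bool) → (Fin k → Bool))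
    (X : Fin m → Bool) : Fin m → Bool :=
  fun i => if h' : (i : ℕ) < k then f (fun j => X (Fin.castLE h j)) ⟨i, h'⟩ else X i

/-- Complement the bit at (0-based) index `t`, keeping all other bits unchanged. -/
def flipAt {m : ℕ} (t : ℕ) (X : Fin m → Bool) : Fin m → Bool :=
  fun i => if (i : ℕ) = t then !(X i) else X i


instance vqAdjDec : ∀ (n : ℕ) (X Y : Fin n → Bool), Decidable (vqAdj n X Y)
  | 0, _, _ => isFalse (fun h => h)
  | 1, X, Y => inferInstanceAs (Decidable (X ≠ Y))
  | (n + 2), X, Y => by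
    letI : Decidable (vqAdj (n + 1) (Fin.init X) (Fin.init Y)) := vqAdjDec (n + 1) _ _
    unfold vqAdj
    infer_instance

instance : DecidableRel (VQ 4).Adj :=
  fun X Y => decidable_of_iff _ (SimpleGraph.fromRel_adj _ X Y).symm

/-- The number of paths `u — x`, `u — v`, `v — y` with `u ≠ y`, `v ≠ x` in `VQ 4`;
an invariant of the ordered edge `(x, y)` under automorphisms. -/
def cnt (x y : Fin 4 → Bool) : ℕ :=
  ((Finset.univ : Finset ((Fin 4 → Bool) × (Fin 4 → Bool))).filter
    (fun p => p.1 ≠ y ∧ p.2 ≠ x ∧ (VQ 4).Adj x p.1 ∧ (VQ 4).Adj y p.2 ∧ (VQ 4).Adj p.1 p.2)).card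

lemma cnt_iso (σ : VQ 4 ≃g VQ 4) (x y : Fin 4 → Bool) : cnt (σ x) (σ y) = cnt x y := by
  classical
  refine (Finset.card_bij' (fun p _ => (σ p.1, σ p.2)) (fun q _ => (σ.symm q.1, σ.symm q.2))
    ?_ ?_ ?_ ?_).symm
  · rintro ⟨u, v⟩ hm
    simp only [Finset.mem_filter, Finset.mem_univ, true_and] at hm ⊢
    obtain ⟨h1, h2, h3, h4, h5⟩ := hm
    refine ⟨fun h => h1 (σ.injective h), fun h => h2 (σ.injective h), ?_, ?_, ?_⟩
    · exact σ.map_adj_iff.mpr h3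
    · exact σ.map_adj_iff.mpr h4
    · exact σ.map_adj_iff.mpr h5
  · rintro ⟨u, v⟩ hm
    simp only [Finset.mem_filter, Finset.mem_univ, true_and] at hm ⊢
    obtain ⟨h1, h2, h3, h4, h5⟩ := hm
    refine ⟨fun h => h1 (by simpa using congrArg σ h), fun h => h2 (by simpa using congrArg σ h),
      ?_, ?_, ?_⟩
    · have := σ.symm.map_adj_iff.mpr h3; simpa using this
    · have := σ.symm.map_adj_iff.mpr h4; simpa using this
    · exact σ.symm.map_adj_iff.mpr h5
  · rintro ⟨u, v⟩ _; simp
  · rintro ⟨u, v⟩ _; simp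

/-- `VQ_4` is not edge-transitive: `0101 1101` and `0101 0001` are both edges of
`VQ_4`, but no automorphism `σ` of `VQ_4` satisfies
`{σ(0101), σ(1101)} = {0101, 0001}`. (A vertex `x₄x₃x₂x₁` is encoded as
`![x₁, x₂, x₃, x₄]`, with `0 = false`, `1 = true`.) -/
theorem VQ4_not_edgeTransitive :
    (VQ 4).Adj ![true, false, true, false] ![true, false, true, true] ∧
    (VQ 4).Adj ![true, false, true, false] ![true, false, false, false] ∧
    ¬ ∃ σ : VQ 4 ≃g VQ 4,
      ({σ ![true, false, true, false], σ ![true, false, true, true]} : Set (Fin 4 → Bool)) =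
        {![true, false, true, false], ![true, false, false, false]} := by
  refine ⟨by decide, by decide, ?_⟩
  rintro ⟨σ, hs⟩
  set a : Fin 4 → Bool := ![true, false, true, false]
  set b : Fin 4 → Bool := ![true, false, true, true]
  set d : Fin 4 → Bool := ![true, false, false, false]
  have hab : cnt a b = 3 := by decide
  have had : cnt a d = 2 := by decide
  have hda : cnt d a = 2 := by decide
  rcases Set.pair_eq_pair_iff.mp hs with ⟨h1, h2⟩ | ⟨h1, h2⟩
  · have := cnt_iso σ a b
    rw [h1, h2, hab, had] at this
    exact absurd this (by norm_num)
  · have := cnt_iso σ a b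
    rw [h1, h2, hab, hda] at this
    exact absurd this (by norm_num)
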